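/- The semilinear form ⟨·,·⟩ on R is τ-invariant: for all u, v ∈ R and every simple root α ∈ Π, ⟨E_α u, v⟩ = ⟨u, q F_α K_α⁻¹ v⟩, ⟨F_α u, v⟩ = ⟨u, q E_α K_α v⟩, and ⟨K_α u, v⟩ = ⟨u, K_α⁻¹ v⟩. -/

import Mathlib

/-!
The adjoint representation of a simply-laced quantum group, realized concretely on the
`ℚ(q)`-vector space with basis `{x_μ : μ ∈ Φ} ∪ {h_α : α ∈ Π}`.
-/

noncomputable section

open Polynomial

/-- The field `ℚ(q)` of rational functions over `ℚ`. -/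
abbrev Qq : Type := RatFunc ℚ

/-- The indeterminate `q ∈ ℚ(q)`. -/
def qv : Qq := RatFunc.X

/-- A datum abstracting a simply-laced root system `Φ` with base `Π`, normalized so that
`(α, α) = 2` for roots: a symmetric bilinear form `B` together with the standard
combinatorial facts about pairings of roots and simple roots that hold in any finite
reduced irreducible crystallographic simply-laced root system. -/
structure SimplyLacedDatum (E : Type) [AddCommGroup E] [Module ℚ E] where
  /-- the inner product `(·,·)` -/
  B : E →ₗ[ℚ] E →ₗ[ℚ] ℚ
  symm : ∀ x y : E, B x y = B y x
  /-- the set of roots `Φ` -/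
  Phi : Set E
  /-- the base `Π` of simple roots -/
  Base : Set E
  base_sub : Base ⊆ Phi
  phi_finite : Phi.Finite
  zero_not_mem : (0 : E) ∉ Phi
  crystallographic : ∀ μ ∈ Phi, ∀ ν ∈ Phi, ∃ n : ℤ, B μ ν = n
  norm_two : ∀ μ ∈ Phi, B μ μ = 2
  neg_mem : ∀ μ ∈ Phi, -μ ∈ Phi
  base_pair : ∀ α ∈ Base, ∀ β ∈ Base, α ≠ β → B α β = 0 ∨ B α β = -1
  pair_range : ∀ μ ∈ Phi, ∀ α ∈ Base,
      B μ α = -2 ∨ B μ α = -1 ∨ B μ α = 0 ∨ B μ α = 1 ∨ B μ α = 2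
  pair_two_iff : ∀ μ ∈ Phi, ∀ α ∈ Base, (B μ α = 2 ↔ μ = α)
  pair_neg_two_iff : ∀ μ ∈ Phi, ∀ α ∈ Base, (B μ α = -2 ↔ μ = -α)
  add_mem : ∀ μ ∈ Phi, ∀ α ∈ Base, B μ α = -1 → μ + α ∈ Phi
  sub_mem : ∀ μ ∈ Phi, ∀ α ∈ Base, B μ α = 1 → μ - α ∈ Phi

namespace SimplyLacedDatum

variable {E : Type} [AddCommGroup E] [Module ℚ E] (D : SimplyLacedDatum E)

/-- The index set for the canonical basis of the adjoint representation:
one index for each root `μ ∈ Φ` (the vector `x_μ`) and one for each simple root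
`α ∈ Π` (the vector `h_α`). -/
def Idx : Type := {μ : E // μ ∈ D.Phi} ⊕ {α : E // α ∈ D.Base}

/-- The adjoint representation `R`, as the free `ℚ(q)`-module on `Idx`. -/
def R : Type := D.Idx →₀ Qq

instance : AddCommGroup D.R := inferInstanceAs (AddCommGroup (D.Idx →₀ Qq))
instance : Module Qq D.R := inferInstanceAs (Module Qq (D.Idx →₀ Qq))

/-- The canonical basis vector `x_μ`, for a root `μ ∈ Φ`. -/
def xv (μ : E) (h : μ ∈ D.Phi) : D.R := Finsupp.single (Sum.inl ⟨μ, h⟩) 1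

/-- The canonical basis vector `h_α`, for a simple root `α ∈ Π`. -/
def hv (α : E) (h : α ∈ D.Base) : D.R := Finsupp.single (Sum.inr ⟨α, h⟩) 1

/-- The `ℚ(q)`-linear operator on `R` sending the basis vector indexed by `i` to `v i`. -/
def opOf (v : D.Idx → D.R) : D.R →ₗ[Qq] D.R :=
  Finsupp.lsum Qq fun i => LinearMap.toSpanSingleton Qq D.R (v i)

open Classical in
/-- The images of the basis vectors under `E_α`. -/
def Evec (α : E) (hα : α ∈ D.Base) : D.Idx → D.R := fun i =>
  match i with
  | Sum.inl μ =>
      if h : D.B μ.1 α = -1 then D.xv (μ.1 + α) (D.add_mem μ.1 μ.2 α hα h)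
      else if D.B μ.1 α = -2 then D.hv α hα
      else 0
  | Sum.inr β =>
      if β.1 = α then (qv + qv⁻¹) • D.xv α (D.base_sub hα)
      else if D.B β.1 α = -1 then D.xv α (D.base_sub hα)
      else 0

open Classical in
/-- The images of the basis vectors under `F_α`. -/
def Fvec (α : E) (hα : α ∈ D.Base) : D.Idx → D.R := fun i =>
  match i with
  | Sum.inl μ =>
      if h : D.B μ.1 α = 1 then D.xv (μ.1 - α) (D.sub_mem μ.1 μ.2 α hα h)
      else if D.B μ.1 α = 2 then D.hv α hα
      else 0
  | Sum.inr β =>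
      if β.1 = α then (qv + qv⁻¹) • D.xv (-α) (D.neg_mem α (D.base_sub hα))
      else if D.B β.1 α = -1 then D.xv (-α) (D.neg_mem α (D.base_sub hα))
      else 0

/-- The images of the basis vectors under `K_α`: `K_α x_μ = q^{(α,μ)} x_μ`,
`K_α h_β = h_β`. -/
def Kvec (α : E) (hα : α ∈ D.Base) : D.Idx → D.R := fun i =>
  match i with
  | Sum.inl μ => qv ^ (D.B α μ.1).num • D.xv μ.1 μ.2
  | Sum.inr β => D.hv β.1 β.2

/-- The images of the basis vectors under `K_α⁻¹`: `K_α⁻¹ x_μ = q^{−(α,μ)} x_μ`,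
`K_α⁻¹ h_β = h_β`. -/
def Kinvvec (α : E) (hα : α ∈ D.Base) : D.Idx → D.R := fun i =>
  match i with
  | Sum.inl μ => qv ^ (-(D.B α μ.1).num) • D.xv μ.1 μ.2
  | Sum.inr β => D.hv β.1 β.2

/-- The operator `E_α` on the adjoint representation. -/
def opE (α : E) (hα : α ∈ D.Base) : D.R →ₗ[Qq] D.R := D.opOf (D.Evec α hα)

/-- The operator `F_α` on the adjoint representation. -/
def opF (α : E) (hα : α ∈ D.Base) : D.R →ₗ[Qq] D.R := D.opOf (D.Fvec α hα)

/-- The operator `K_α` on the adjoint representation. -/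
def opK (α : E) (hα : α ∈ D.Base) : D.R →ₗ[Qq] D.R := D.opOf (D.Kvec α hα)

/-- The operator `K_α⁻¹` on the adjoint representation. -/
def opKinv (α : E) (hα : α ∈ D.Base) : D.R →ₗ[Qq] D.R := D.opOf (D.Kinvvec α hα)

end SimplyLacedDatum

end

noncomputable section

namespace SimplyLacedDatum

/-- `X` is transcendental over `ℚ` in `ℚ(q)`. -/
theorem ratfuncX_transcendental : Transcendental ℚ (RatFunc.X : Qq) := by
  have h1 : Transcendental ℚ (Polynomial.X : Polynomial ℚ) := Polynomial.transcendental_X ℚ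
  have h2 := (transcendental_algebraMap_iff (R := ℚ) (S := Polynomial ℚ) (A := Qq)
      (IsFractionRing.injective (Polynomial ℚ) Qq)).mpr h1
  simpa using h2

/-- `q⁻¹` is transcendental over `ℚ` in `ℚ(q)`. -/
theorem qv_inv_transcendental : Transcendental ℚ (qv⁻¹ : Qq) := fun h =>
  ratfuncX_transcendental (IsAlgebraic.inv_iff.mp h)

/-- The bar involution of `ℚ(q)`: the `ℚ`-algebra map determined by `q ↦ q⁻¹`. -/
def barHom : Qq →+* Qq :=
  IsFractionRing.lift (A := Polynomial ℚ)
    (g := (Polynomial.aeval (qv⁻¹ : Qq)).toRingHom)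
    (transcendental_iff_injective.mp qv_inv_transcendental)

variable {E : Type} [AddCommGroup E] [Module ℚ E] (D : SimplyLacedDatum E)

open Classical in
/-- The Gram matrix of the semilinear form on the canonical basis of `R`:
`⟨x_μ, x_ν⟩ = δ_{μν}`, `⟨x_μ, h_α⟩ = ⟨h_α, x_μ⟩ = 0`, `⟨h_α, h_α⟩ = 1 + q²`,
`⟨h_α, h_β⟩ = q` if `(α,β) = −1`, and `⟨h_α, h_β⟩ = 0` if `(α,β) = 0`. -/
def gram : D.Idx → D.Idx → Qq := fun i j =>
  match i, j with
  | Sum.inl μ, Sum.inl ν => if μ = ν then 1 else 0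
  | Sum.inl _, Sum.inr _ => 0
  | Sum.inr _, Sum.inl _ => 0
  | Sum.inr α, Sum.inr β =>
      if α = β then 1 + qv ^ 2 else if D.B α.1 β.1 = -1 then qv else 0

/-- The semilinear form `⟨·,·⟩` on `R`: `ℚ(q)`-antilinear in the first variable
(via the bar involution `q ↦ q⁻¹`) and `ℚ(q)`-linear in the second, given on the
canonical basis by the Gram matrix `gram`. -/
def form (u v : D.R) : Qq :=
  u.sum fun i c => v.sum fun j d => barHom c * d * D.gram i j

end SimplyLacedDatum

end

attribute [reducible] SimplyLacedDatum.Idx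

noncomputable section
namespace SimplyLacedDatum

lemma qv_ne_zero : (qv : Qq) ≠ 0 := RatFunc.X_ne_zero

lemma barHom_qv : barHom qv = qv⁻¹ := by
  have h : (qv : Qq) = algebraMap (Polynomial ℚ) Qq Polynomial.X := by
    rw [RatFunc.algebraMap_X]; exact rfl
  rw [h, barHom, IsFractionRing.lift_algebraMap]
  rw [← h]; simp

lemma barHom_zpow (n : ℤ) : barHom (qv ^ n) = qv ^ (-n) := by
  rw [map_zpow₀, barHom_qv, inv_zpow, ← zpow_neg]

lemma barHom_qq : barHom (qv + qv⁻¹) = qv + qv⁻¹ := by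
  rw [map_add, barHom_qv, map_inv₀, barHom_qv, inv_inv, add_comm]

/-- The form on a general free module, used to prove the `form_*` lemmas. -/
def formF {ι : Type} (g : ι → ι → Qq) (u v : ι →₀ Qq) : Qq :=
  u.sum fun i c => v.sum fun j d => barHom c * d * g i j

lemma formF_zero_left {ι : Type} (g : ι → ι → Qq) (v : ι →₀ Qq) : formF g 0 v = 0 := by
  simp [formF]

lemma formF_zero_right {ι : Type} (g : ι → ι → Qq) (u : ι →₀ Qq) : formF g u 0 = 0 := by
  simp [formF]

lemma formF_add_left {ι : Type} (g : ι → ι → Qq) (u u' v : ι →₀ Qq) :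
    formF g (u + u') v = formF g u v + formF g u' v := by
  unfold formF
  refine Finsupp.sum_add_index' (fun i => by simp) (fun i b₁ b₂ => ?_)
  rw [← Finsupp.sum_add]
  exact Finsupp.sum_congr fun j _ => by rw [map_add]; ring

lemma formF_add_right {ι : Type} (g : ι → ι → Qq) (u v v' : ι →₀ Qq) :
    formF g u (v + v') = formF g u v + formF g u v' := by
  unfold formF
  rw [← Finsupp.sum_add]
  exact Finsupp.sum_congr fun i _ =>
    Finsupp.sum_add_index' (fun j => by simp) (fun j d₁ d₂ => by ring)

lemma formF_smul_left {ι : Type} (g : ι → ι → Qq) (c : Qq) (u v : ι →₀ Qq) :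
    formF g (c • u) v = barHom c * formF g u v := by
  unfold formF
  rw [Finsupp.sum_smul_index (fun i => by simp), Finsupp.mul_sum]
  refine Finsupp.sum_congr fun i _ => ?_
  rw [Finsupp.mul_sum]
  exact Finsupp.sum_congr fun j _ => by rw [map_mul]; ring

lemma formF_smul_right {ι : Type} (g : ι → ι → Qq) (c : Qq) (u v : ι →₀ Qq) :
    formF g u (c • v) = c * formF g u v := by
  unfold formF
  rw [Finsupp.mul_sum]
  refine Finsupp.sum_congr fun i _ => ?_
  rw [Finsupp.sum_smul_index (fun j => by simp), Finsupp.mul_sum]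
  exact Finsupp.sum_congr fun j _ => by ring

lemma formF_ss {ι : Type} (g : ι → ι → Qq) (i j : ι) :
    formF g (Finsupp.single i 1) (Finsupp.single j 1) = g i j := by
  unfold formF
  rw [Finsupp.sum_single_index (by simp), Finsupp.sum_single_index (by simp)]
  simp

variable {E : Type} [AddCommGroup E] [Module ℚ E] (D : SimplyLacedDatum E)

/-- The basis vector of `R` indexed by `i`, as an element of `R`. -/
def sgl (i : D.Idx) : D.R := Finsupp.single i 1

lemma xv_eq (μ : E) (h : μ ∈ D.Phi) : D.xv μ h = D.sgl (Sum.inl ⟨μ, h⟩) := rfl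

lemma hv_eq (α : E) (h : α ∈ D.Base) : D.hv α h = D.sgl (Sum.inr ⟨α, h⟩) := rfl

lemma opOf_single (w : D.Idx → D.R) (i : D.Idx) (c : Qq) :
    D.opOf w (Finsupp.single i c) = c • w i := by
  exact Finsupp.lsum_single (S := Qq) (fun i => LinearMap.toSpanSingleton Qq D.R (w i)) i c

lemma opOf_sgl (w : D.Idx → D.R) (i : D.Idx) : D.opOf w (D.sgl i) = w i :=
  (D.opOf_single w i 1).trans (one_smul _ _)

lemma form_zero_left (v : D.R) : D.form 0 v = 0 := formF_zero_left D.gram v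

lemma form_zero_right (u : D.R) : D.form u 0 = 0 := formF_zero_right D.gram u

lemma form_add_left (u u' v : D.R) : D.form (u + u') v = D.form u v + D.form u' v :=
  formF_add_left D.gram u u' v

lemma form_add_right (u v v' : D.R) : D.form u (v + v') = D.form u v + D.form u v' :=
  formF_add_right D.gram u v v'

lemma form_smul_left (c : Qq) (u v : D.R) : D.form (c • u) v = barHom c * D.form u v :=
  formF_smul_left D.gram c u v

lemma form_smul_right (c : Qq) (u v : D.R) : D.form u (c • v) = c * D.form u v :=
  formF_smul_right D.gram c u v

lemma form_ss (i j : D.Idx) :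
    D.form (D.sgl i) (D.sgl j) = D.gram i j := formF_ss D.gram i j

lemma form_adjoint_of_basis (T S : D.R →ₗ[Qq] D.R)
    (h : ∀ i j : D.Idx, D.form (T (Finsupp.single i 1)) (Finsupp.single j 1)
      = D.form (Finsupp.single i 1) (S (Finsupp.single j 1)))
    (u v : D.R) : D.form (T u) v = D.form u (S v) := by
  induction u using Finsupp.induction_linear with
  | zero =>
    calc D.form (T 0) v = D.form 0 v := by rw [map_zero]
      _ = 0 := D.form_zero_left v
      _ = D.form 0 (S v) := (D.form_zero_left _).symm
  | add f g hf hg =>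
    calc D.form (T (f + g)) v = D.form (T f + T g) v := congrArg (D.form · v) (map_add T f g)
      _ = D.form (T f) v + D.form (T g) v := D.form_add_left _ _ _
      _ = D.form f (S v) + D.form g (S v) := by rw [hf, hg]
      _ = D.form (f + g) (S v) := (D.form_add_left f g (S v)).symm
  | single i c =>
    induction v using Finsupp.induction_linear with
    | zero =>
      calc D.form (T (Finsupp.single i c)) 0 = 0 := D.form_zero_right _
        _ = D.form (Finsupp.single i c) 0 := (D.form_zero_right _).symm
        _ = D.form (Finsupp.single i c) (S 0) := by rw [map_zero]
    | add f g hf hg =>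
      calc D.form (T (Finsupp.single i c)) (f + g)
          = D.form (T (Finsupp.single i c)) f + D.form (T (Finsupp.single i c)) g :=
            D.form_add_right _ f g
        _ = D.form (Finsupp.single i c) (S f) + D.form (Finsupp.single i c) (S g) := by
            rw [hf, hg]
        _ = D.form (Finsupp.single i c) (S f + S g) := (D.form_add_right _ _ _).symm
        _ = D.form (Finsupp.single i c) (S (f + g)) :=
            congrArg (D.form _) (map_add S f g).symm
    | single j d =>
      have hi : (Finsupp.single i c : D.R) = c • D.sgl i :=
        (by rw [Finsupp.smul_single', mul_one] : (c • Finsupp.single i 1 : D.Idx →₀ Qq) = _).symm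
      have hj : (Finsupp.single j d : D.R) = d • D.sgl j :=
        (by rw [Finsupp.smul_single', mul_one] : (d • Finsupp.single j 1 : D.Idx →₀ Qq) = _).symm
      rw [hi, hj, map_smul, map_smul, form_smul_left, form_smul_right,
        form_smul_left, form_smul_right,
        show D.form (T (D.sgl i)) (D.sgl j) = D.form (D.sgl i) (S (D.sgl j)) from h i j]

end SimplyLacedDatum
end

noncomputable section
namespace SimplyLacedDatum

variable {E : Type} [AddCommGroup E] [Module ℚ E] (D : SimplyLacedDatum E)

lemma gram_inl_inr (a : {μ : E // μ ∈ D.Phi}) (b : {α : E // α ∈ D.Base}) :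
    D.gram (Sum.inl a) (Sum.inr b) = 0 := rfl

lemma gram_inr_inl (a : {α : E // α ∈ D.Base}) (b : {μ : E // μ ∈ D.Phi}) :
    D.gram (Sum.inr a) (Sum.inl b) = 0 := rfl

open Classical in
lemma gram_ll (a : E) (ha : a ∈ D.Phi) (b : E) (hb : b ∈ D.Phi) :
    D.gram (Sum.inl ⟨a, ha⟩) (Sum.inl ⟨b, hb⟩) = if a = b then 1 else 0 := by
  simp only [gram]
  by_cases h : a = b
  · rw [if_pos (Subtype.ext h), if_pos h]
  · rw [if_neg (fun hc => h (congrArg Subtype.val hc)), if_neg h]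

open Classical in
lemma gram_rr (a : E) (ha : a ∈ D.Base) (b : E) (hb : b ∈ D.Base) :
    D.gram (Sum.inr ⟨a, ha⟩) (Sum.inr ⟨b, hb⟩)
      = if a = b then 1 + qv ^ 2 else if D.B a b = -1 then qv else 0 := by
  simp only [gram]
  by_cases h : a = b
  · rw [if_pos (Subtype.ext h), if_pos h]
  · rw [if_neg (fun hc => h (congrArg Subtype.val hc)), if_neg h]

lemma num_of' {x : ℚ} {n : ℤ} (h : x = (n:ℚ)) : x.num = n := by rw [h, Rat.num_intCast]

lemma B_add_left (x y z : E) : D.B (x + y) z = D.B x z + D.B y z := by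
  rw [map_add, LinearMap.add_apply]

lemma B_sub_left (x y z : E) : D.B (x - y) z = D.B x z - D.B y z := by
  rw [map_sub, LinearMap.sub_apply]

lemma B_neg_left (x z : E) : D.B (-x) z = -D.B x z := by
  rw [map_neg, LinearMap.neg_apply]

lemma qv_zpow_neg_two : (qv : Qq) ^ (-(2:ℤ)) = (qv ^ 2)⁻¹ := by
  rw [zpow_neg, zpow_two, sq]

lemma E_basis (α : E) (hα : α ∈ D.Base) (i j : D.Idx) :
    D.form (D.opE α hα (D.sgl i)) (D.sgl j)
      = D.form (D.sgl i)
          ((qv • ((D.opF α hα).comp (D.opKinv α hα))) (D.sgl j)) := by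
  have hαΦ : α ∈ D.Phi := D.base_sub hα
  have hBαα : D.B α α = 2 := D.norm_two α hαΦ
  have h0 : (qv : Qq) ≠ 0 := qv_ne_zero
  obtain ⟨μ, hμ⟩ | ⟨β, hβ⟩ := i <;> obtain ⟨ν, hν⟩ | ⟨γ, hγ⟩ := j <;>
    simp only [opE, opF, opKinv, opOf_sgl, one_smul, LinearMap.smul_apply,
      LinearMap.comp_apply, Evec, Fvec, Kinvvec, xv_eq, hv_eq, map_smul, form_smul_right]
  · -- x_μ vs x_ν
    by_cases h1 : D.B μ α = -1 <;> by_cases h2 : D.B ν α = 1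
    · have hn : (D.B α ν).num = 1 := num_of' (by rw [D.symm α ν, h2]; norm_num)
      rw [dif_pos h1, dif_pos h2, form_ss, form_ss, hn, gram_ll, gram_ll]
      by_cases he : μ + α = ν
      · rw [if_pos he, if_pos (eq_sub_iff_add_eq.mpr he), mul_one,
          zpow_neg, zpow_one, mul_inv_cancel₀ h0]
      · rw [if_neg he, if_neg (fun hc => he (eq_sub_iff_add_eq.mp hc)), mul_zero, mul_zero]
    · have hne : μ + α ≠ ν := fun he => h2 (by rw [← he, D.B_add_left, h1, hBαα]; norm_num)
      rw [dif_pos h1, form_ss, gram_ll, if_neg hne]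
      by_cases h3 : D.B ν α = 2
      · rw [dif_neg h2, if_pos h3, form_ss, gram_inl_inr, mul_zero, mul_zero]
      · rw [dif_neg h2, if_neg h3, form_zero_right, mul_zero, mul_zero]
    · have hne : μ ≠ ν - α := fun he => h1 (by rw [he, D.B_sub_left, h2, hBαα]; norm_num)
      rw [dif_pos h2, form_ss, gram_ll, if_neg hne, mul_zero, mul_zero]
      by_cases h3 : D.B μ α = -2
      · rw [dif_neg h1, if_pos h3, form_ss, gram_inr_inl]
      · rw [dif_neg h1, if_neg h3, form_zero_left]
    · by_cases h3 : D.B μ α = -2 <;> by_cases h4 : D.B ν α = 2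
      · rw [dif_neg h1, if_pos h3, dif_neg h2, if_pos h4, form_ss, form_ss,
          gram_inr_inl, gram_inl_inr, mul_zero, mul_zero]
      · rw [dif_neg h1, if_pos h3, dif_neg h2, if_neg h4, form_ss, gram_inr_inl,
          form_zero_right, mul_zero, mul_zero]
      · rw [dif_neg h1, if_neg h3, dif_neg h2, if_pos h4, form_zero_left, form_ss,
          gram_inl_inr, mul_zero, mul_zero]
      · rw [dif_neg h1, if_neg h3, dif_neg h2, if_neg h4, form_zero_left,
          form_zero_right, mul_zero, mul_zero]
  · -- x_μ vs h_γ
    by_cases hg : γ = α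
    · rw [if_pos hg, form_smul_right, form_ss, gram_ll]
      by_cases hm : D.B μ α = -2
      · have hμα : μ = -α := (D.pair_neg_two_iff μ hμ α hα).mp hm
        subst hμα
        rw [dif_neg (by rw [hm]; norm_num), if_pos hm, form_ss, gram_rr,
          if_pos hg.symm, if_pos rfl]
        field_simp
        ring
      · have hne : μ ≠ -α := fun he => hm ((D.pair_neg_two_iff μ hμ α hα).mpr he)
        rw [if_neg hne, mul_zero, mul_zero]
        by_cases h1 : D.B μ α = -1
        · rw [dif_pos h1, form_ss, gram_inl_inr]
        · rw [dif_neg h1, if_neg hm, form_zero_left]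
    · rw [if_neg hg]
      by_cases hg2 : D.B γ α = -1
      · rw [if_pos hg2, form_ss, gram_ll]
        by_cases hm : D.B μ α = -2
        · have hμα : μ = -α := (D.pair_neg_two_iff μ hμ α hα).mp hm
          subst hμα
          rw [dif_neg (by rw [hm]; norm_num), if_pos hm, form_ss, gram_rr,
            if_neg (fun h => hg h.symm), if_pos ((D.symm α γ).trans hg2),
            if_pos rfl, mul_one]
        · have hne : μ ≠ -α := fun he => hm ((D.pair_neg_two_iff μ hμ α hα).mpr he)
          rw [if_neg hne, mul_zero]
          by_cases h1 : D.B μ α = -1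
          · rw [dif_pos h1, form_ss, gram_inl_inr]
          · rw [dif_neg h1, if_neg hm, form_zero_left]
      · rw [if_neg hg2, form_zero_right, mul_zero]
        by_cases h1 : D.B μ α = -1
        · rw [dif_pos h1, form_ss, gram_inl_inr]
        · rw [dif_neg h1]
          by_cases hm : D.B μ α = -2
          · rw [if_pos hm, form_ss, gram_rr, if_neg (fun h => hg h.symm),
              if_neg (fun h => hg2 ((D.symm γ α).trans h))]
          · rw [if_neg hm, form_zero_left]
  · -- h_β vs x_ν
    by_cases hv2 : D.B ν α = 2
    · have hνα : ν = α := (D.pair_two_iff ν hν α hα).mp hv2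
      have hn : (D.B α ν).num = 2 := num_of' (by rw [D.symm α ν, hv2]; norm_num)
      rw [dif_neg (show ¬ D.B ν α = 1 by rw [hv2]; norm_num), if_pos hv2, form_ss, hn, gram_rr]
      by_cases hb : β = α
      · rw [if_pos hb, form_smul_left, barHom_qq, form_ss, gram_ll, if_pos hνα.symm,
          if_pos hb, qv_zpow_neg_two]
        field_simp
        ring
      · by_cases hb2 : D.B β α = -1
        · rw [if_neg hb, if_pos hb2, form_ss, gram_ll, if_pos hνα.symm, if_neg hb,
            if_pos hb2, qv_zpow_neg_two]
          field_simp
        · rw [if_neg hb, if_neg hb2, form_zero_left, if_neg hb, if_neg hb2,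
            mul_zero, mul_zero]
    · have hne : α ≠ ν := fun he => hv2 (by rw [← he]; exact hBαα)
      by_cases h2 : D.B ν α = 1
      · rw [dif_pos h2, form_ss, gram_inr_inl, mul_zero, mul_zero]
        by_cases hb : β = α
        · rw [if_pos hb, form_smul_left, form_ss, gram_ll, if_neg hne, mul_zero]
        · by_cases hb2 : D.B β α = -1
          · rw [if_neg hb, if_pos hb2, form_ss, gram_ll, if_neg hne]
          · rw [if_neg hb, if_neg hb2, form_zero_left]
      · rw [dif_neg h2, if_neg hv2, form_zero_right, mul_zero, mul_zero]
        by_cases hb : β = α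
        · rw [if_pos hb, form_smul_left, form_ss, gram_ll, if_neg hne, mul_zero]
        · by_cases hb2 : D.B β α = -1
          · rw [if_neg hb, if_pos hb2, form_ss, gram_ll, if_neg hne]
          · rw [if_neg hb, if_neg hb2, form_zero_left]
  · -- h_β vs h_γ
    split_ifs <;>
      simp [form_smul_left, form_smul_right, form_ss, gram_inl_inr, gram_inr_inl,
        form_zero_left, form_zero_right]

end SimplyLacedDatum
end

noncomputable section
namespace SimplyLacedDatum

variable {E : Type} [AddCommGroup E] [Module ℚ E] (D : SimplyLacedDatum E)

lemma F_basis (α : E) (hα : α ∈ D.Base) (i j : D.Idx) :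
    D.form (D.opF α hα (D.sgl i)) (D.sgl j)
      = D.form (D.sgl i)
          ((qv • ((D.opE α hα).comp (D.opK α hα))) (D.sgl j)) := by
  have hαΦ : α ∈ D.Phi := D.base_sub hα
  have hBαα : D.B α α = 2 := D.norm_two α hαΦ
  have h0 : (qv : Qq) ≠ 0 := qv_ne_zero
  obtain ⟨μ, hμ⟩ | ⟨β, hβ⟩ := i <;> obtain ⟨ν, hν⟩ | ⟨γ, hγ⟩ := j <;>
    simp only [opE, opF, opK, opOf_sgl, one_smul, LinearMap.smul_apply,
      LinearMap.comp_apply, Evec, Fvec, Kvec, xv_eq, hv_eq, map_smul, form_smul_right]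
  · -- x_μ vs x_ν
    by_cases h1 : D.B μ α = 1 <;> by_cases h2 : D.B ν α = -1
    · have hn : (D.B α ν).num = -1 := num_of' (by rw [D.symm α ν, h2]; norm_num)
      rw [dif_pos h1, dif_pos h2, form_ss, form_ss, hn, gram_ll, gram_ll]
      by_cases he : μ - α = ν
      · rw [if_pos he, if_pos (sub_eq_iff_eq_add.mp he), mul_one,
          zpow_neg, zpow_one, mul_inv_cancel₀ h0]
      · rw [if_neg he, if_neg (fun hc => he (by rw [hc, add_sub_cancel_right])),
          mul_zero, mul_zero]
    · have hne : μ - α ≠ ν := fun he => h2 (by rw [← he, D.B_sub_left, h1, hBαα]; norm_num)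
      rw [dif_pos h1, form_ss, gram_ll, if_neg hne]
      by_cases h3 : D.B ν α = -2
      · rw [dif_neg h2, if_pos h3, form_ss, gram_inl_inr, mul_zero, mul_zero]
      · rw [dif_neg h2, if_neg h3, form_zero_right, mul_zero, mul_zero]
    · have hne : μ ≠ ν + α := fun he => h1 (by rw [he, D.B_add_left, h2, hBαα]; norm_num)
      rw [dif_pos h2, form_ss, gram_ll, if_neg hne, mul_zero, mul_zero]
      by_cases h3 : D.B μ α = 2
      · rw [dif_neg h1, if_pos h3, form_ss, gram_inr_inl]
      · rw [dif_neg h1, if_neg h3, form_zero_left]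
    · by_cases h3 : D.B μ α = 2 <;> by_cases h4 : D.B ν α = -2
      · rw [dif_neg h1, if_pos h3, dif_neg h2, if_pos h4, form_ss, form_ss,
          gram_inr_inl, gram_inl_inr, mul_zero, mul_zero]
      · rw [dif_neg h1, if_pos h3, dif_neg h2, if_neg h4, form_ss, gram_inr_inl,
          form_zero_right, mul_zero, mul_zero]
      · rw [dif_neg h1, if_neg h3, dif_neg h2, if_pos h4, form_zero_left, form_ss,
          gram_inl_inr, mul_zero, mul_zero]
      · rw [dif_neg h1, if_neg h3, dif_neg h2, if_neg h4, form_zero_left,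
          form_zero_right, mul_zero, mul_zero]
  · -- x_μ vs h_γ
    by_cases hg : γ = α
    · rw [if_pos hg, form_smul_right, form_ss, gram_ll]
      by_cases hm : D.B μ α = 2
      · have hμα : μ = α := (D.pair_two_iff μ hμ α hα).mp hm
        rw [dif_neg (by rw [hm]; norm_num), if_pos hm, form_ss, gram_rr,
          if_pos hg.symm, if_pos hμα]
        field_simp
        ring
      · have hne : μ ≠ α := fun he => hm ((D.pair_two_iff μ hμ α hα).mpr he)
        rw [if_neg hne, mul_zero, mul_zero]
        by_cases h1 : D.B μ α = 1
        · rw [dif_pos h1, form_ss, gram_inl_inr]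
        · rw [dif_neg h1, if_neg hm, form_zero_left]
    · rw [if_neg hg]
      by_cases hg2 : D.B γ α = -1
      · rw [if_pos hg2, form_ss, gram_ll]
        by_cases hm : D.B μ α = 2
        · have hμα : μ = α := (D.pair_two_iff μ hμ α hα).mp hm
          rw [dif_neg (by rw [hm]; norm_num), if_pos hm, form_ss, gram_rr,
            if_neg (fun h => hg h.symm), if_pos ((D.symm α γ).trans hg2),
            if_pos hμα, mul_one]
        · have hne : μ ≠ α := fun he => hm ((D.pair_two_iff μ hμ α hα).mpr he)
          rw [if_neg hne, mul_zero]
          by_cases h1 : D.B μ α = 1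
          · rw [dif_pos h1, form_ss, gram_inl_inr]
          · rw [dif_neg h1, if_neg hm, form_zero_left]
      · rw [if_neg hg2, form_zero_right, mul_zero]
        by_cases h1 : D.B μ α = 1
        · rw [dif_pos h1, form_ss, gram_inl_inr]
        · rw [dif_neg h1]
          by_cases hm : D.B μ α = 2
          · rw [if_pos hm, form_ss, gram_rr, if_neg (fun h => hg h.symm),
              if_neg (fun h => hg2 ((D.symm γ α).trans h))]
          · rw [if_neg hm, form_zero_left]
  · -- h_β vs x_ν
    by_cases hv2 : D.B ν α = -2
    · have hνα : ν = -α := (D.pair_neg_two_iff ν hν α hα).mp hv2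
      have hn : (D.B α ν).num = -2 := num_of'
        (by rw [D.symm α ν, hv2]; norm_num)
      rw [dif_neg (show ¬ D.B ν α = -1 by rw [hv2]; norm_num), if_pos hv2, form_ss, hn, gram_rr]
      by_cases hb : β = α
      · rw [if_pos hb, form_smul_left, barHom_qq, form_ss, gram_ll, if_pos hνα.symm,
          if_pos hb, qv_zpow_neg_two]
        field_simp
        ring
      · by_cases hb2 : D.B β α = -1
        · rw [if_neg hb, if_pos hb2, form_ss, gram_ll, if_pos hνα.symm, if_neg hb,
            if_pos hb2, qv_zpow_neg_two]
          field_simp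
        · rw [if_neg hb, if_neg hb2, form_zero_left, if_neg hb, if_neg hb2,
            mul_zero, mul_zero]
    · have hne : -α ≠ ν := fun he => hv2 (by rw [← he, D.B_neg_left, hBαα])
      by_cases h2 : D.B ν α = -1
      · rw [dif_pos h2, form_ss, gram_inr_inl, mul_zero, mul_zero]
        by_cases hb : β = α
        · rw [if_pos hb, form_smul_left, form_ss, gram_ll, if_neg hne, mul_zero]
        · by_cases hb2 : D.B β α = -1
          · rw [if_neg hb, if_pos hb2, form_ss, gram_ll, if_neg hne]
          · rw [if_neg hb, if_neg hb2, form_zero_left]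
      · rw [dif_neg h2, if_neg hv2, form_zero_right, mul_zero, mul_zero]
        by_cases hb : β = α
        · rw [if_pos hb, form_smul_left, form_ss, gram_ll, if_neg hne, mul_zero]
        · by_cases hb2 : D.B β α = -1
          · rw [if_neg hb, if_pos hb2, form_ss, gram_ll, if_neg hne]
          · rw [if_neg hb, if_neg hb2, form_zero_left]
  · -- h_β vs h_γ
    split_ifs <;>
      simp [form_smul_left, form_smul_right, form_ss, gram_inl_inr, gram_inr_inl,
        form_zero_left, form_zero_right]

lemma K_basis (α : E) (hα : α ∈ D.Base) (i j : D.Idx) :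
    D.form (D.opK α hα (D.sgl i)) (D.sgl j)
      = D.form (D.sgl i) (D.opKinv α hα (D.sgl j)) := by
  obtain ⟨μ, hμ⟩ | ⟨β, hβ⟩ := i <;> obtain ⟨ν, hν⟩ | ⟨γ, hγ⟩ := j <;>
    simp only [opK, opKinv, opOf_sgl, one_smul, Kvec, Kinvvec, xv_eq, hv_eq,
      form_smul_left, form_smul_right, barHom_zpow, form_ss]
  · by_cases he : μ = ν
    · subst he; rfl
    · rw [gram_ll, if_neg he, mul_zero, mul_zero]
  · rw [gram_inl_inr, mul_zero]
  · rw [gram_inr_inl, mul_zero]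
end SimplyLacedDatum
end

/-- the semilinear form `⟨·,·⟩` on `R` is `τ`-invariant: for all
`u, v ∈ R` and simple roots `α`, `⟨E_α u, v⟩ = ⟨u, q F_α K_α⁻¹ v⟩`,
`⟨F_α u, v⟩ = ⟨u, q E_α K_α v⟩`, and `⟨K_α u, v⟩ = ⟨u, K_α⁻¹ v⟩`. -/
theorem SimplyLacedDatum.form_tau_invariant {E : Type} [AddCommGroup E] [Module ℚ E]
    (D : SimplyLacedDatum E) (α : E) (hα : α ∈ D.Base) (u v : D.R) :
    D.form (D.opE α hα u) v = D.form u (qv • D.opF α hα (D.opKinv α hα v)) ∧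
    D.form (D.opF α hα u) v = D.form u (qv • D.opE α hα (D.opK α hα v)) ∧
    D.form (D.opK α hα u) v = D.form u (D.opKinv α hα v) := by
  exact ⟨D.form_adjoint_of_basis _ _ (D.E_basis α hα) u v,
    D.form_adjoint_of_basis _ _ (D.F_basis α hα) u v,
    D.form_adjoint_of_basis _ _ (D.K_basis α hα) u v⟩
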